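/- Let H < 1/2 and 0 < t ≤ T. For every integer r ≥ 1 there exists C such that for all n ≥ 2, the sum over j = 0 to ⌊nt⌋ - 1 of |E[ΔB_{j/n} · (B_{j/n} + B_{(j+1)/n})/2]|^r is at most C n^{-2(r-1)H}. -/

import Mathlib

open MeasureTheory

/-- Subadditivity of `x ^ p` for `0 ≤ p ≤ 1` on nonnegative reals. -/
lemma real_rpow_add_le_add_rpow {x y p : ℝ} (hx : 0 ≤ x) (hy : 0 ≤ y)
    (hp : 0 ≤ p) (hp1 : p ≤ 1) : (x + y) ^ p ≤ x ^ p + y ^ p := by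
  have h := NNReal.rpow_add_le_add_rpow (Real.toNNReal x) (Real.toNNReal y) hp hp1
  have hxy : Real.toNNReal (x + y) = Real.toNNReal x + Real.toNNReal y :=
    Real.toNNReal_add hx hy
  have h' : ((Real.toNNReal (x + y)) ^ p : NNReal)
      ≤ (Real.toNNReal x) ^ p + (Real.toNNReal y) ^ p := by rw [hxy]; exact h
  have := NNReal.coe_le_coe.mpr h'
  simpa [NNReal.coe_rpow, Real.coe_toNNReal x hx, Real.coe_toNNReal y hy,
    Real.coe_toNNReal (x + y) (add_nonneg hx hy)] using this

/-- Lemma 2.6(b): for fBm with `H < 1/2` and `0 < t ≤ T`, for each `r ≥ 1` there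
is `C` such that for all `n ≥ 2`,
`∑_{j=0}^{⌊nt⌋-1} |E[ΔB_{j/n} (B_{j/n}+B_{(j+1)/n})/2]|^r ≤ C n^{-2(r-1)H}`. -/
theorem fbm_sum_increment_midpoint_covariance_power_bound
    {Ω : Type*} [MeasurableSpace Ω] (μ : Measure Ω) [IsProbabilityMeasure μ]
    (H : ℝ) (hH0 : 0 < H) (hH1 : H < 1/2) (T t : ℝ) (ht : 0 < t) (htT : t ≤ T)
    (B : ℝ → Ω → ℝ)
    (hint : ∀ s u : ℝ, Integrable (fun ω => B s ω * B u ω) μ)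
    (hcov : ∀ s u : ℝ, 0 ≤ s → 0 ≤ u →
      ∫ ω, B s ω * B u ω ∂μ = (s ^ (2*H) + u ^ (2*H) - |u - s| ^ (2*H)) / 2)
    (r : ℕ) (hr : 1 ≤ r) :
    ∃ C : ℝ, 0 < C ∧ ∀ n : ℕ, 2 ≤ n →
      ∑ j ∈ Finset.range ⌊(n:ℝ)*t⌋₊,
        |∫ ω, (B (((j:ℝ)+1)/n) ω - B ((j:ℝ)/n) ω)
            * ((B ((j:ℝ)/n) ω + B (((j:ℝ)+1)/n) ω) / 2) ∂μ| ^ r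
        ≤ C * (n : ℝ) ^ (-(2*((r:ℝ)-1)*H)) := by
  have h2H0 : 0 < 2 * H := by linarith
  have h2H1 : 2 * H ≤ 1 := by linarith
  have hvar : ∀ s : ℝ, 0 ≤ s → ∫ ω, B s ω * B s ω ∂μ = s ^ (2*H) := by
    intro s hs
    rw [hcov s s hs hs]
    have : |s - s| ^ (2*H) = 0 := by
      simp [Real.zero_rpow (ne_of_gt h2H0)]
    rw [this]; ring
  refine ⟨t ^ (2*H) / 2 + 1, by positivity, ?_⟩
  intro n hn
  have hn0 : (0:ℝ) < n := by exact_mod_cast Nat.lt_of_lt_of_le Nat.zero_lt_two hn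
  have key : ∀ j : ℕ,
      ∫ ω, (B (((j:ℝ)+1)/n) ω - B ((j:ℝ)/n) ω)
          * ((B ((j:ℝ)/n) ω + B (((j:ℝ)+1)/n) ω) / 2) ∂μ
        = ((((j:ℝ)+1)/n) ^ (2*H) - ((j:ℝ)/n) ^ (2*H)) / 2 := by
    intro j
    have hs : (0:ℝ) ≤ (j:ℝ)/n := by positivity
    have hu : (0:ℝ) ≤ ((j:ℝ)+1)/n := by positivity
    have heq : (fun ω => (B (((j:ℝ)+1)/n) ω - B ((j:ℝ)/n) ω)
          * ((B ((j:ℝ)/n) ω + B (((j:ℝ)+1)/n) ω) / 2))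
        = fun ω => (B (((j:ℝ)+1)/n) ω * B (((j:ℝ)+1)/n) ω
            - B ((j:ℝ)/n) ω * B ((j:ℝ)/n) ω) / 2 := by
      funext ω; ring
    rw [heq, integral_div, integral_sub (hint _ _) (hint _ _), hvar _ hu, hvar _ hs]
  set m := ⌊(n:ℝ)*t⌋₊ with hm
  set a : ℕ → ℝ := fun j => ((((j:ℝ)+1)/n) ^ (2*H) - ((j:ℝ)/n) ^ (2*H)) / 2 with ha
  have ha_nonneg : ∀ j : ℕ, 0 ≤ a j := by
    intro j
    have : ((j:ℝ)/n) ^ (2*H) ≤ (((j:ℝ)+1)/n) ^ (2*H) := by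
      apply Real.rpow_le_rpow (by positivity) ?_ (le_of_lt h2H0)
      gcongr
      linarith
    simp only [ha]
    linarith
  set M : ℝ := (n:ℝ) ^ (-(2*H)) with hM
  have hM0 : 0 ≤ M := Real.rpow_nonneg hn0.le _
  have h1n : ((1:ℝ)/n) ^ (2*H) = M := by
    rw [hM, one_div, ← Real.rpow_neg_one (n:ℝ), ← Real.rpow_mul hn0.le]
    norm_num
  have ha_le : ∀ j : ℕ, a j ≤ M := by
    intro j
    have heq : ((j:ℝ)+1)/n = (j:ℝ)/n + 1/n := by ring
    have hsub : (((j:ℝ)+1)/n) ^ (2*H) ≤ ((j:ℝ)/n) ^ (2*H) + ((1:ℝ)/n) ^ (2*H) := by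
      rw [heq]
      exact real_rpow_add_le_add_rpow (by positivity) (by positivity) h2H0.le h2H1
    have := ha_nonneg j
    simp only [ha] at this ⊢
    rw [h1n] at hsub
    linarith
  set g : ℕ → ℝ := fun j => ((j:ℝ)/n) ^ (2*H) / 2 with hg
  have hag : ∀ j : ℕ, a j = g (j+1) - g j := by
    intro j
    simp only [ha, hg]
    push_cast
    ring
  have hsum : ∑ j ∈ Finset.range m, a j = ((m:ℝ)/n) ^ (2*H) / 2 := by
    rw [Finset.sum_congr rfl (fun j _ => hag j), Finset.sum_range_sub g m]
    have hg0 : g 0 = 0 := by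
      simp [hg, Real.zero_rpow (ne_of_gt h2H0)]
    rw [hg0]; simp [hg]
  have hmt : ((m:ℝ)/n) ≤ t := by
    rw [div_le_iff₀ hn0]
    have h1 := Nat.floor_le (by positivity : (0:ℝ) ≤ (n:ℝ)*t)
    rw [← hm] at h1
    linarith
  have hsum_le : ∑ j ∈ Finset.range m, a j ≤ t ^ (2*H) / 2 := by
    rw [hsum]
    have : ((m:ℝ)/n) ^ (2*H) ≤ t ^ (2*H) :=
      Real.rpow_le_rpow (by positivity) hmt h2H0.le
    linarith
  have hMpow : M ^ (r-1) = (n:ℝ) ^ (-(2*((r:ℝ)-1)*H)) := by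
    rw [hM, ← Real.rpow_natCast ((n:ℝ) ^ (-(2*H))) (r-1), ← Real.rpow_mul hn0.le]
    congr 1
    have : ((r-1:ℕ):ℝ) = (r:ℝ) - 1 := by
      rw [Nat.cast_sub hr]; norm_num
    rw [this]; ring
  calc ∑ j ∈ Finset.range m,
        |∫ ω, (B (((j:ℝ)+1)/n) ω - B ((j:ℝ)/n) ω)
            * ((B ((j:ℝ)/n) ω + B (((j:ℝ)+1)/n) ω) / 2) ∂μ| ^ r
      = ∑ j ∈ Finset.range m, (a j) ^ r := by
        refine Finset.sum_congr rfl (fun j _ => ?_)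
        rw [key j, abs_of_nonneg (ha_nonneg j)]
    _ ≤ ∑ j ∈ Finset.range m, M ^ (r-1) * a j := by
        refine Finset.sum_le_sum (fun j _ => ?_)
        have : (a j) ^ r = (a j) ^ (r-1) * a j := by
          conv_lhs => rw [show r = (r-1) + 1 from (Nat.succ_pred_eq_of_pos hr).symm]
          rw [pow_succ]
        rw [this]
        exact mul_le_mul_of_nonneg_right
          (pow_le_pow_left₀ (ha_nonneg j) (ha_le j) _) (ha_nonneg j)
    _ = M ^ (r-1) * ∑ j ∈ Finset.range m, a j := by rw [Finset.mul_sum]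
    _ ≤ M ^ (r-1) * (t ^ (2*H) / 2) :=
        mul_le_mul_of_nonneg_left hsum_le (pow_nonneg hM0 _)
    _ ≤ (t ^ (2*H) / 2 + 1) * (n:ℝ) ^ (-(2*((r:ℝ)-1)*H)) := by
        rw [← hMpow, mul_comm (t ^ (2*H) / 2 + 1)]
        exact mul_le_mul_of_nonneg_left (by linarith) (pow_nonneg hM0 _)
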